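/- Let G be a digraph, P = ⟨v_0, v_1, …, v_ℓ⟩ a directed path in G, and S a finite set of vertices each of which is either an ancestor of P or a descendant of P (and none of which is a bridge of P). Then the index set {0, 1, …, ℓ} can be partitioned into at most |S|+1 contiguous intervals such that whenever i and j lie in the same interval, for every s ∈ S it holds that (s ⪯ v_i ⟺ s ⪯ v_j) and (v_i ⪯ s ⟺ v_j ⪯ s). -/
import Mathlib


/-- `HasPath E n u v` : there is a directed path with exactly `n` edges from
`u` to `v` in the digraph with edge relation `E`. -/
def HasPath {V : Type} (E : V → V → Prop) : ℕ → V → V → Prop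
  | 0, u, v => u = v
  | n + 1, u, v => ∃ w, E u w ∧ HasPath E n w v

/-- `u ⪯ v` : there is a directed path (possibly of length 0) from `u` to `v`. -/
def Reach {V : Type} (E : V → V → Prop) (u v : V) : Prop := ∃ n, HasPath E n u v

lemma hasPath_trans {V : Type} {E : V → V → Prop} :
    ∀ (m : ℕ) (u v : V), HasPath E m u v → ∀ (n : ℕ) (w : V), HasPath E n v w →
      HasPath E (m + n) u w := by
  intro m
  induction m with
  | zero =>
    intro u v h n w h2
    cases h
    rw [Nat.zero_add]
    exact h2
  | succ m ih =>
    intro u v h n w h2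
    obtain ⟨x, hx, h'⟩ := h
    rw [show m + 1 + n = (m + n) + 1 by omega]
    exact ⟨x, hx, ih x v h' n w h2⟩

lemma reach_trans {V : Type} {E : V → V → Prop} {u v w : V}
    (h1 : Reach E u v) (h2 : Reach E v w) : Reach E u w := by
  obtain ⟨m, hm⟩ := h1
  obtain ⟨n, hn⟩ := h2
  exact ⟨m + n, hasPath_trans m u v hm n w hn⟩

/-- Let `P = ⟨v_0, …, v_ℓ⟩` be a directed path in a digraph `G` and `S` a
finite set of vertices, each of which is an ancestor or a descendant of `P`
(so none is a bridge).  Then `{0, …, ℓ}` can be partitioned into at most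
`|S| + 1` contiguous intervals (given by cut points `c 0 = 0 ≤ c 1 ≤ ⋯ ≤ c m
= ℓ+1`) such that whenever `i` and `j` lie in the same interval, every `s ∈ S`
satisfies `s ⪯ v_i ⟺ s ⪯ v_j` and `v_i ⪯ s ⟺ v_j ⪯ s`. -/
theorem stmt_10 {V : Type} (E : V → V → Prop) (ℓ : ℕ) (P : ℕ → V)
    (hP : ∀ i < ℓ, E (P i) (P (i + 1))) (S : Finset V)
    (hS : ∀ s ∈ S,
      (Reach E s (P ℓ) ∧ ¬ Reach E (P 0) s) ∨ (Reach E (P 0) s ∧ ¬ Reach E s (P ℓ))) :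
    ∃ (m : ℕ) (c : ℕ → ℕ), m ≤ S.card + 1 ∧ Monotone c ∧ c 0 = 0 ∧ c m = ℓ + 1 ∧
      ∀ r < m, ∀ i j, c r ≤ i → i < c (r + 1) → c r ≤ j → j < c (r + 1) →
        ∀ s ∈ S, (Reach E s (P i) ↔ Reach E s (P j)) ∧
          (Reach E (P i) s ↔ Reach E (P j) s) := by
  classical
  -- segments of the path give reachability
  have hseg : ∀ d i, i + d ≤ ℓ → HasPath E d (P i) (P (i + d)) := by
    intro d
    induction d with
    | zero => intro i _; rfl
    | succ d ih =>
      intro i h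
      refine ⟨P (i + 1), hP i (by omega), ?_⟩
      have h' := ih (i + 1) (by omega)
      rwa [show i + 1 + d = i + (d + 1) by omega] at h'
  have hpath : ∀ i j, i ≤ j → j ≤ ℓ → Reach E (P i) (P j) := by
    intro i j hij hj
    refine ⟨j - i, ?_⟩
    have := hseg (j - i) i (by omega)
    rwa [show i + (j - i) = j by omega] at this
  -- the threshold function
  set t : V → ℕ := fun s =>
    min (ℓ + 1) (if Reach E s (P ℓ) then sInf {i | Reach E s (P i)}
      else sInf {i | ¬ Reach E (P i) s}) with ht
  have htle : ∀ s, t s ≤ ℓ + 1 := fun s => min_le_left _ _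
  -- main per-element claim
  have hmain : ∀ s ∈ S, ∀ i j, i ≤ ℓ → j ≤ ℓ → (t s ≤ i ↔ t s ≤ j) →
      (Reach E s (P i) ↔ Reach E s (P j)) ∧ (Reach E (P i) s ↔ Reach E (P j) s) := by
    intro s hs i j hi hj hiff
    rcases hS s hs with ⟨hl, h0⟩ | ⟨h0, hl⟩
    · -- ancestor
      have hB : ℓ ∈ {i | Reach E s (P i)} := hl
      have hts : t s = sInf {i | Reach E s (P i)} := by
        rw [ht]
        simp only [if_pos hl]
        exact min_eq_right (le_trans (Nat.sInf_le hB) (by omega))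
      have hchar : ∀ k, k ≤ ℓ → (Reach E s (P k) ↔ t s ≤ k) := by
        intro k hk
        constructor
        · intro h; rw [hts]; exact Nat.sInf_le h
        · intro h
          have hmem : Reach E s (P (t s)) := by
            rw [hts]; exact Nat.sInf_mem ⟨ℓ, hB⟩
          exact reach_trans hmem (hpath (t s) k (by omega) hk)
      constructor
      · rw [hchar i hi, hchar j hj]; exact hiff
      · constructor
        · intro h; exact absurd (reach_trans (hpath 0 i (by omega) hi) h) h0
        · intro h; exact absurd (reach_trans (hpath 0 j (by omega) hj) h) h0
    · -- descendant
      refine ⟨⟨fun h => absurd (reach_trans h (hpath i ℓ hi le_rfl)) hl,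
        fun h => absurd (reach_trans h (hpath j ℓ hj le_rfl)) hl⟩, ?_⟩
      by_cases hA : {i | ¬ Reach E (P i) s}.Nonempty
      · have hts : t s = min (ℓ + 1) (sInf {i | ¬ Reach E (P i) s}) := by
          rw [ht]; simp only [if_neg hl]
        by_cases hle : sInf {i | ¬ Reach E (P i) s} ≤ ℓ
        · have hts' : t s = sInf {i | ¬ Reach E (P i) s} := by
            rw [hts]; exact min_eq_right (by omega)
          have hchar : ∀ k, k ≤ ℓ → (Reach E (P k) s ↔ ¬ t s ≤ k) := by
            intro k hk
            constructor
            · intro h hle'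
              have hmem : ¬ Reach E (P (t s)) s := by
                rw [hts']; exact Nat.sInf_mem hA
              exact hmem (reach_trans (hpath (t s) k hle' hk) h)
            · intro h
              by_contra hr
              exact h (by rw [hts']; exact Nat.sInf_le hr)
          rw [hchar i hi, hchar j hj]
          exact not_congr hiff
        · -- all indices up to ℓ reach s
          have hall : ∀ k, k ≤ ℓ → Reach E (P k) s := by
            intro k hk
            by_contra h
            exact hle (le_trans (Nat.sInf_le h) hk)
          simp [hall i hi, hall j hj]
      · -- every index reaches s
        push_neg at hA
        have hall : ∀ k, Reach E (P k) s := by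
          intro k
          by_contra h
          have hk : k ∈ {i | ¬ Reach E (P i) s} := h
          rw [hA] at hk
          exact hk
        simp [hall i, hall j]
  -- the cut set
  set C : Finset ℕ := insert 0 (insert (ℓ + 1) (S.image t)) with hC
  have h0C : (0 : ℕ) ∈ C := Finset.mem_insert_self _ _
  have hlC : ℓ + 1 ∈ C := Finset.mem_insert_of_mem (Finset.mem_insert_self _ _)
  have hCbound : ∀ x ∈ C, x ≤ ℓ + 1 := by
    intro x hx
    rw [hC] at hx
    rcases Finset.mem_insert.mp hx with h | hx
    · omega
    rcases Finset.mem_insert.mp hx with h | hx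
    · omega
    obtain ⟨s, _, rfl⟩ := Finset.mem_image.mp hx
    exact htle s
  set n : ℕ := C.card with hn
  have hn2 : 2 ≤ n := by
    rw [hn]
    exact Finset.one_lt_card.mpr ⟨0, h0C, ℓ + 1, hlC, by omega⟩
  set e : Fin n ≃o {x // x ∈ C} := C.orderIsoOfFin rfl with he
  set c : ℕ → ℕ := fun r => if h : r < n then ((e ⟨r, h⟩ : {x // x ∈ C}) : ℕ) else ℓ + 1
    with hc
  have hcC : ∀ r (h : r < n), c r ∈ C := by
    intro r h
    rw [hc]
    simp only [dif_pos h]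
    exact (e ⟨r, h⟩).2
  have hcle : ∀ r, c r ≤ ℓ + 1 := by
    intro r
    by_cases h : r < n
    · exact hCbound _ (hcC r h)
    · rw [hc]; simp [dif_neg h]
  have hmono : Monotone c := by
    intro a b hab
    by_cases hb : b < n
    · have ha : a < n := lt_of_le_of_lt hab hb
      rw [hc]
      simp only [dif_pos ha, dif_pos hb]
      exact Subtype.coe_le_coe.mpr (e.monotone (Fin.mk_le_mk.mpr hab))
    · by_cases ha : a < n
      · calc c a ≤ ℓ + 1 := hcle a
          _ = c b := by rw [hc]; simp [dif_neg hb]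
      · rw [hc]; simp [dif_neg ha, dif_neg hb]
  set m : ℕ := n - 1 with hm
  have hmn : m < n := by omega
  have hc0 : c 0 = 0 := by
    have h0n : 0 < n := by omega
    obtain ⟨k, hk⟩ : ∃ k : Fin n, e k = ⟨0, h0C⟩ := ⟨e.symm _, e.apply_symm_apply _⟩
    have hle : (⟨0, h0n⟩ : Fin n) ≤ k := by
      rw [Fin.le_def]; exact Nat.zero_le _
    have h2 := Subtype.coe_le_coe.mpr (e.monotone hle)
    rw [hk] at h2
    have h3 : c 0 ≤ 0 := by
      rw [hc]; simp only [dif_pos h0n]; exact h2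
    omega
  have hcm : c m = ℓ + 1 := by
    refine le_antisymm (hcle m) ?_
    obtain ⟨k, hk⟩ : ∃ k : Fin n, e k = ⟨ℓ + 1, hlC⟩ := ⟨e.symm _, e.apply_symm_apply _⟩
    have hle : k ≤ (⟨m, hmn⟩ : Fin n) := by
      rw [Fin.le_def]
      have := k.isLt
      simp only [Fin.val_mk]
      omega
    have h2 := Subtype.coe_le_coe.mpr (e.monotone hle)
    rw [hk] at h2
    rw [hc]; simp only [dif_pos hmn]
    exact h2
  have hgap : ∀ r, r < m → ∀ x ∈ C, c r < x → c (r + 1) ≤ x := by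
    intro r hr x hx hlt
    have hr1 : r + 1 < n := by omega
    have hrn : r < n := by omega
    obtain ⟨k, hk⟩ : ∃ k : Fin n, e k = ⟨x, hx⟩ := ⟨e.symm _, e.apply_symm_apply _⟩
    have hltk : (⟨r, hrn⟩ : Fin n) < k := by
      rw [← e.lt_iff_lt]
      apply Subtype.coe_lt_coe.mp
      rw [hk]
      rw [hc] at hlt
      simpa [dif_pos hrn] using hlt
    have hle : (⟨r + 1, hr1⟩ : Fin n) ≤ k := by
      rw [Fin.lt_def] at hltk
      rw [Fin.le_def]
      simp only [Fin.val_mk] at hltk ⊢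
      omega
    have h2 := Subtype.coe_le_coe.mpr (e.monotone hle)
    rw [hk] at h2
    rw [hc]
    simpa [dif_pos hr1] using h2
  refine ⟨m, c, ?_, hmono, hc0, hcm, ?_⟩
  · -- cardinality bound
    have : C.card ≤ S.card + 2 := by
      calc C.card ≤ (insert (ℓ + 1) (S.image t)).card + 1 := Finset.card_insert_le _ _
        _ ≤ (S.image t).card + 1 + 1 := by
            have := Finset.card_insert_le (ℓ + 1) (S.image t); omega
        _ ≤ S.card + 2 := by have := Finset.card_image_le (s := S) (f := t); omega
    omega
  · intro r hr i j hci hci' hcj hcj' s hs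
    have htsC : t s ∈ C := by
      rw [hC]
      exact Finset.mem_insert_of_mem (Finset.mem_insert_of_mem
        (Finset.mem_image_of_mem t hs))
    have hiℓ : i ≤ ℓ := by
      have := hcle (r + 1); omega
    have hjℓ : j ≤ ℓ := by
      have := hcle (r + 1); omega
    have hiff : t s ≤ i ↔ t s ≤ j := by
      by_cases h : t s ≤ c r
      · constructor <;> intro _ <;> omega
      · have := hgap r hr (t s) htsC (by omega)
        constructor <;> intro h' <;> omega
    exact hmain s hs i j hiℓ hjℓ hiff
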